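/- arXiv:1807.01004 — 2 statements merged into one kernel-verified Lean document; each statement's English description precedes it below -/
import Mathlib

section
/- Non-violating trace transparency, forward direction: let φ ∈ SHMLnf be closed and guarded, let p be a system and t ∈ Act* a trace such that no prefix of t (including t itself) is a violating trace of p with respect to φ. If p =t=> p', then there exists a transducer e' such that ⟦φ⟧e[p] =t=> e'[p'], i.e., the instrumented system can weakly perform the same trace t, ending in a state whose underlying system component is p'. -/
set_option autoImplicit false

/-- A labelled transition system over observable actions `Act`;
`none` plays the role of the silent action τ. -/
structure LTS (Act : Type) where
  S : Type
  Tr : S → Option Act → S → Prop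

namespace Enf

open scoped Classical

variable {Act : Type}

/-- Zero or more silent steps. -/
def TauStar (L : LTS Act) : L.S → L.S → Prop :=
  Relation.ReflTransGen (fun p q => L.Tr p none q)

/-- The weak transition `p =a=> q`. -/
def WStep (L : LTS Act) (p : L.S) (a : Act) (q : L.S) : Prop :=
  ∃ p₁ p₂, TauStar L p p₁ ∧ L.Tr p₁ (some a) p₂ ∧ TauStar L p₂ q

/-- Weak trace `p =t=> q`. -/
inductive WTrace (L : LTS Act) : L.S → List Act → L.S → Prop
  | nil {p q : L.S} : TauStar L p q → WTrace L p [] q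
  | cons {p r q : L.S} {a : Act} {t : List Act} :
      WStep L p a r → WTrace L r t q → WTrace L p (a :: t) q

/-- SHML formulas: truth, falsehood, fixpoint variables, finite conjunctions,
modalities `[η]φ` (a guard set of actions together with an action-indexed
continuation, representing the symbolic action and the matching substitutions),
and greatest fixpoints. -/
inductive Frm (Act : Type) : Type where
  | tt : Frm Act
  | ff : Frm Act
  | var : ℕ → Frm Act
  | conj : (n : ℕ) → (Fin n → Frm Act) → Frm Act
  | box : Set Act → (Act → Frm Act) → Frm Act
  | max : ℕ → Frm Act → Frm Act

namespace Frm

/-- Free fixpoint variables. -/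
def fv : Frm Act → Set ℕ
  | .tt => ∅
  | .ff => ∅
  | .var X => {X}
  | .conj _ f => ⋃ i, fv (f i)
  | .box G k => ⋃ a ∈ G, fv (k a)
  | .max X φ => fv φ \ {X}

def Closed (φ : Frm Act) : Prop := fv φ = ∅

/-- Substitution `φ[ψ/X]` (of a closed formula `ψ`). -/
def subst : Frm Act → ℕ → Frm Act → Frm Act
  | .tt, _, _ => .tt
  | .ff, _, _ => .ff
  | .var Y, X, ψ => if Y = X then ψ else .var Y
  | .conj n f, X, ψ => .conj n (fun i => subst (f i) X ψ)
  | .box G k, X, ψ => .box G (fun a => subst (k a) X ψ)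
  | .max Y φ, X, ψ => if Y = X then .max Y φ else .max Y (subst φ X ψ)

/-- The normal-form fragment SHMLnf: conjunctions are conjunctions of
modalities with pairwise-disjoint guards, and each greatest fixpoint binds a
variable occurring free in its body. -/
inductive IsNF : Frm Act → Prop
  | tt : IsNF .tt
  | ff : IsNF .ff
  | var (X : ℕ) : IsNF (.var X)
  | conj (n : ℕ) (G : Fin n → Set Act) (k : Fin n → Act → Frm Act)
      (hdisj : ∀ i j : Fin n, i ≠ j → ∀ a : Act, a ∈ G i → a ∉ G j)
      (hk : ∀ i : Fin n, ∀ a ∈ G i, IsNF (k i a)) :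
      IsNF (.conj n fun i => .box (G i) (k i))
  | max (X : ℕ) (φ : Frm Act) (hfree : X ∈ fv φ) (hφ : IsNF φ) : IsNF (.max X φ)

/-- `gvar X φ`: the variable `X` does not occur unguarded (i.e. outside every
modality) in `φ`. -/
def gvar (X : ℕ) : Frm Act → Prop
  | .tt => True
  | .ff => True
  | .var Y => Y ≠ X
  | .conj _ f => ∀ i, gvar X (f i)
  | .box _ _ => True
  | .max Y φ => Y = X ∨ gvar X φ

/-- A formula is guarded if every occurrence of a fixpoint variable lies
beneath a modality. -/
def Guarded : Frm Act → Prop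
  | .tt => True
  | .ff => True
  | .var _ => True
  | .conj _ f => ∀ i, Guarded (f i)
  | .box G k => ∀ a ∈ G, Guarded (k a)
  | .max X φ => gvar X φ ∧ Guarded φ

/-- Number of top-level greatest-fixpoint binders. -/
def topMax : Frm Act → ℕ
  | .max _ φ => topMax φ + 1
  | _ => 0

end Frm

/-- Denotational semantics of (possibly open) formulas, relative to an
environment mapping fixpoint variables to sets of states; `max` is interpreted
as the greatest fixpoint of the induced monotone map. -/
def sem (L : LTS Act) : Frm Act → (ℕ → Set L.S) → Set L.S
  | .tt, _ => Set.univ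
  | .ff, _ => ∅
  | .var X, ρ => ρ X
  | .conj _ f, ρ => ⋂ i, sem L (f i) ρ
  | .box G k, ρ => {p | ∀ a ∈ G, ∀ q, WStep L p a q → q ∈ sem L (k a) ρ}
  | .max X φ, ρ => ⋃₀ {S | S ⊆ sem L φ (Function.update ρ X S)}

/-- Semantics of closed formulas. -/
def Sem (L : LTS Act) (φ : Frm Act) : Set L.S := sem L φ fun _ => ∅

/-- Satisfiability. -/
def SatIn (L : LTS Act) (φ : Frm Act) : Prop := (Sem L φ).Nonempty

/-- The violation relation `p ⊨v^t φ`, defined as the least relation closed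
under the given rules. -/
inductive Viol (L : LTS Act) : L.S → List Act → Frm Act → Prop
  | ff (p : L.S) : Viol L p [] .ff
  | conj {p : L.S} {t : List Act} {n : ℕ} {f : Fin n → Frm Act} (j : Fin n) :
      Viol L p t (f j) → Viol L p t (.conj n f)
  | box {p p' : L.S} {t : List Act} {a : Act} {G : Set Act} {k : Act → Frm Act} :
      a ∈ G → WStep L p a p' → Viol L p' t (k a) → Viol L p (a :: t) (.box G k)
  | max {p : L.S} {t : List Act} {X : ℕ} {φ : Frm Act} :
      Viol L p t (Frm.subst φ X (.max X φ)) → Viol L p t (.max X φ)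

/-- Transducers (enforcement monitors): identity, symbolic transformation
prefixes (a guard set of extended input actions, with `none` standing for the
insertion pattern •, an output per matched input, with `none` standing for τ,
and a continuation per matched input), finite selections, recursion, and
recursion variables. -/
inductive Trn (Act : Type) : Type where
  | id : Trn Act
  | prf : Set (Option Act) → (Option Act → Option Act) → (Option Act → Trn Act) → Trn Act
  | sel : (n : ℕ) → (Fin n → Trn Act) → Trn Act
  | fix : ℕ → Trn Act → Trn Act
  | var : ℕ → Trn Act

namespace Trn

def tsubst : Trn Act → ℕ → Trn Act → Trn Act
  | .id, _, _ => .id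
  | .prf G out k, x, s => .prf G out fun γ => tsubst (k γ) x s
  | .sel n f, x, s => .sel n fun i => tsubst (f i) x s
  | .fix y e, x, s => if y = x then .fix y e else .fix y (tsubst e x s)
  | .var y, x, s => if y = x then s else .var y

end Trn

/-- Transducer transitions: labels are pairs (input, output) where input
`none` is the insertion pattern • and output `none` is τ. -/
inductive TStep : Trn Act → Option Act × Option Act → Trn Act → Prop
  | id (a : Act) : TStep .id (some a, some a) .id
  | prf {G : Set (Option Act)} {out : Option Act → Option Act}
      {k : Option Act → Trn Act} {γ : Option Act} (h : γ ∈ G) :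
      TStep (.prf G out k) (γ, out γ) (k γ)
  | sel {n : ℕ} {f : Fin n → Trn Act} {l : Option Act × Option Act}
      {e' : Trn Act} (i : Fin n) (h : TStep (f i) l e') :
      TStep (.sel n f) l e'
  | fix {x : ℕ} {e : Trn Act} {l : Option Act × Option Act} {e' : Trn Act}
      (h : TStep (Trn.tsubst e x (.fix x e)) l e') :
      TStep (.fix x e) l e'

/-- Instrumentation of a transducer on a system. -/
inductive IStep (L : LTS Act) : Trn Act × L.S → Option Act → Trn Act × L.S → Prop
  | trn {e e' : Trn Act} {p p' : L.S} {a : Act} {μ : Option Act} :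
      L.Tr p (some a) p' → TStep e (some a, μ) e' → IStep L (e, p) μ (e', p')
  | asy {e : Trn Act} {p p' : L.S} :
      L.Tr p none p' → IStep L (e, p) none (e, p')
  | ins {e e' : Trn Act} {p : L.S} {μ : Option Act} :
      TStep e (none, μ) e' → IStep L (e, p) μ (e', p)
  | ter {e : Trn Act} {p p' : L.S} {a : Act} :
      L.Tr p (some a) p' →
      (∀ μ e', ¬ TStep e (some a, μ) e') →
      (∀ μ e', ¬ TStep e (none, μ) e') →
      IStep L (e, p) (some a) (Trn.id, p')

/-- The LTS of monitored systems `e[p]`. -/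
def instLTS (L : LTS Act) : LTS Act := ⟨Trn Act × L.S, IStep L⟩

/-- Strong bisimulations between (the state spaces of) two LTSs. -/
def IsBisim (L₁ L₂ : LTS Act) (R : L₁.S → L₂.S → Prop) : Prop :=
  ∀ s r, R s r →
    (∀ μ s', L₁.Tr s μ s' → ∃ r', L₂.Tr r μ r' ∧ R s' r') ∧
    (∀ μ r', L₂.Tr r μ r' → ∃ s', L₁.Tr s μ s' ∧ R s' r')

/-- Strong bisimilarity. -/
def Bisim (L₁ L₂ : LTS Act) (s : L₁.S) (r : L₂.S) : Prop :=
  ∃ R, IsBisim L₁ L₂ R ∧ R s r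

/-- The synthesis function `⟦-⟧e` from SHMLnf formulas to transducers:
formula variable `X` becomes monitor variable `X+1`; `tt` and `ff` become the
identity monitor; `max X.φ` becomes the corresponding recursive monitor; and a
normalised conjunction of modalities becomes a recursive selection (on the
fresh variable `0`) of symbolic prefixes that suppress (output τ, continue as
the recursion variable) actions whose continuation formula is `ff` and pass
through all other matched actions, continuing with the synthesis of the
respective continuation formula. -/
noncomputable def synth : Frm Act → Trn Act
  | .tt => .id
  | .ff => .id
  | .var X => .var (X + 1)
  | .max X φ => .fix (X + 1) (synth φ)
  | .box G k =>
      .prf {γ | ∃ a ∈ G, γ = some a}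
        (fun γ =>
          match γ with
          | some a => if k a = Frm.ff then none else some a
          | none => none)
        (fun γ =>
          match γ with
          | some a => if k a = Frm.ff then Trn.var 0 else synth (k a)
          | none => .id)
  | .conj n f => .fix 0 (.sel n fun i => synth (f i))

/-- Fuelled residual function (the fuel is consumed by fixpoint unfoldings;
on guarded closed SHMLnf formulas `topMax φ + 1` units of fuel suffice). -/
noncomputable def afterFuel : ℕ → Frm Act → Act → Frm Act
  | 0, _, _ => .tt
  | n + 1, φ, a =>
    match φ with
    | .max X ψ => afterFuel n (Frm.subst ψ X (.max X ψ)) a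
    | .conj m f =>
        if h : ∃ i : Fin m, ∃ G : Set Act, ∃ k : Act → Frm Act,
            f i = Frm.box G k ∧ a ∈ G
        then h.choose_spec.choose_spec.choose a
        else .tt
    | ψ => ψ

/-- The residual `after(φ, a)` of a guarded closed SHMLnf formula. -/
noncomputable def after (φ : Frm Act) (a : Act) : Frm Act :=
  afterFuel (Frm.topMax φ + 1) φ a

/-- Satisfaction relations (the coinductive rules of `⊨s`). -/
def IsSatRel (L : LTS Act) (R : L.S → Frm Act → Prop) : Prop :=
  (∀ p, ¬ R p .ff) ∧
  (∀ p (n : ℕ) (f : Fin n → Frm Act), R p (.conj n f) → ∀ i, R p (f i)) ∧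
  (∀ p (G : Set Act) (k : Act → Frm Act), R p (.box G k) →
      ∀ a ∈ G, ∀ q, WStep L p a q → R q (k a)) ∧
  (∀ p (X : ℕ) (φ : Frm Act), R p (.max X φ) → R p (Frm.subst φ X (.max X φ)))

/-- The largest satisfaction relation `⊨s`. -/
def SatCo (L : LTS Act) (p : L.S) (φ : Frm Act) : Prop :=
  ∃ R, IsSatRel L R ∧ R p φ


section AuxProofs

variable {Act : Type} {L : LTS Act}

lemma tauStar_lift (e : Trn Act) {p q : L.S} (h : TauStar L p q) :
    TauStar (instLTS L) (e, p) (e, q) := by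
  induction h with
  | refl => exact Relation.ReflTransGen.refl
  | tail _ hstep ih => exact ih.tail (IStep.asy hstep)

lemma id_wstep {p q : L.S} {a : Act} (h : WStep L p a q) :
    WStep (instLTS L) (Trn.id, p) a (Trn.id, q) := by
  obtain ⟨p₁, p₂, h1, h2, h3⟩ := h
  exact ⟨(Trn.id, p₁), (Trn.id, p₂), tauStar_lift _ h1, IStep.trn h2 (TStep.id a),
    tauStar_lift _ h3⟩

lemma id_wtrace {p q : L.S} {t : List Act} (h : WTrace L p t q) :
    WTrace (instLTS L) (Trn.id, p) t (Trn.id, q) := by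
  induction h with
  | nil h => exact .nil (tauStar_lift _ h)
  | cons h _ ih => exact .cons (id_wstep h) ih

lemma fv_subst {ψ : Frm Act} (hψ : Frm.fv ψ = ∅) (X : ℕ) :
    ∀ φ : Frm Act, Frm.fv (Frm.subst φ X ψ) = Frm.fv φ \ {X} := by
  intro φ
  induction φ with
  | tt => simp [Frm.subst, Frm.fv]
  | ff => simp [Frm.subst, Frm.fv]
  | var Y =>
    by_cases h : Y = X
    · simp [Frm.subst, Frm.fv, h, hψ]
    · ext x
      simp only [Frm.subst, if_neg h, Frm.fv, Set.mem_singleton_iff, Set.mem_diff]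
      constructor
      · rintro rfl; exact ⟨rfl, h⟩
      · exact fun hx => hx.1
  | conj n f ih => ext x; simp [Frm.subst, Frm.fv, ih]; try tauto
  | box G k ih => ext x; simp [Frm.subst, Frm.fv, ih]; try tauto
  | max Y φ ih =>
    by_cases h : Y = X
    · subst h; ext x; simp [Frm.subst, Frm.fv]; try tauto
    · ext x; simp [Frm.subst, Frm.fv, h, ih]; try tauto

lemma gvar_of_not_fv {X : ℕ} : ∀ {φ : Frm Act}, X ∉ Frm.fv φ → Frm.gvar X φ := by
  intro φ
  induction φ with
  | tt => intro _; trivial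
  | ff => intro _; trivial
  | var Y => intro h; simp [Frm.fv] at h; exact fun hYX => h hYX.symm
  | conj n f ih => intro h; simp [Frm.fv] at h; exact fun i => ih i (h i)
  | box G k ih => intro _; trivial
  | max Y φ ih =>
    intro h
    by_cases hYX : Y = X
    · exact Or.inl hYX
    · refine Or.inr (ih ?_)
      intro hmem
      simp [Frm.fv] at h
      exact hYX (h hmem).symm

lemma gvar_subst {ψ : Frm Act} (hψ : Frm.fv ψ = ∅) {Y X : ℕ} :
    ∀ {φ : Frm Act}, Frm.gvar Y φ → Frm.gvar Y (Frm.subst φ X ψ) := by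
  intro φ
  induction φ with
  | tt => intro _; trivial
  | ff => intro _; trivial
  | var Z =>
    intro h
    by_cases hZX : Z = X
    · show Frm.gvar Y (if Z = X then ψ else .var Z)
      rw [if_pos hZX]
      exact gvar_of_not_fv (by simp [hψ])
    · show Frm.gvar Y (if Z = X then ψ else .var Z)
      rw [if_neg hZX]
      exact h
  | conj n f ih => intro h i; exact ih i (h i)
  | box G k ih => intro _; trivial
  | max Z φ ih =>
    intro h
    show Frm.gvar Y (if Z = X then Frm.max Z φ else .max Z (Frm.subst φ X ψ))
    by_cases hZX : Z = X
    · rw [if_pos hZX]; exact h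
    · rw [if_neg hZX]
      rcases h with h | h
      · exact Or.inl h
      · exact Or.inr (ih h)

lemma guarded_subst {ψ : Frm Act} (hψc : Frm.fv ψ = ∅) (hψg : Frm.Guarded ψ) {X : ℕ} :
    ∀ {φ : Frm Act}, Frm.Guarded φ → Frm.Guarded (Frm.subst φ X ψ) := by
  intro φ
  induction φ with
  | tt => intro _; trivial
  | ff => intro _; trivial
  | var Z =>
    intro _
    show Frm.Guarded (if Z = X then ψ else .var Z)
    by_cases hZX : Z = X
    · rw [if_pos hZX]; exact hψg
    · rw [if_neg hZX]; trivial
  | conj n f ih => intro h i; exact ih i (h i)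
  | box G k ih => intro h a ha; exact ih a (h a ha)
  | max Z φ ih =>
    intro h
    show Frm.Guarded (if Z = X then Frm.max Z φ else .max Z (Frm.subst φ X ψ))
    by_cases hZX : Z = X
    · rw [if_pos hZX]; exact h
    · rw [if_neg hZX]
      exact ⟨gvar_subst hψc h.1, ih h.2⟩

lemma isNF_subst {ψ : Frm Act} (hψc : Frm.fv ψ = ∅) (hψn : ψ.IsNF) {X : ℕ}
    {φ : Frm Act} (h : φ.IsNF) : (Frm.subst φ X ψ).IsNF := by
  induction h with
  | tt => exact Frm.IsNF.tt
  | ff => exact Frm.IsNF.ff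
  | var Y =>
    show Frm.IsNF (if Y = X then ψ else .var Y)
    by_cases hYX : Y = X
    · rw [if_pos hYX]; exact hψn
    · rw [if_neg hYX]; exact Frm.IsNF.var Y
  | conj n G k hdisj hk ih =>
    have hEq : Frm.subst (.conj n fun i => .box (G i) (k i)) X ψ
        = .conj n (fun i => .box (G i) (fun a => Frm.subst (k i a) X ψ)) := rfl
    rw [hEq]
    exact Frm.IsNF.conj n G _ hdisj (fun i b hb => ih i b hb)
  | max Y φ hfree hφ ih =>
    show Frm.IsNF (if Y = X then Frm.max Y φ else .max Y (Frm.subst φ X ψ))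
    by_cases hYX : Y = X
    · rw [if_pos hYX]; exact Frm.IsNF.max Y φ hfree hφ
    · rw [if_neg hYX]
      refine Frm.IsNF.max Y _ ?_ ih
      rw [fv_subst hψc]
      exact ⟨hfree, hYX⟩

lemma subst_eq_ff_iff {ψ : Frm Act} (hψ : ψ ≠ Frm.ff) (X : ℕ) :
    ∀ φ : Frm Act, (Frm.subst φ X ψ = Frm.ff ↔ φ = Frm.ff) := by
  intro φ
  cases φ with
  | tt => simp [Frm.subst]
  | ff => simp [Frm.subst]
  | var Y => by_cases h : Y = X <;> simp [Frm.subst, h, hψ]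
  | conj n f => simp [Frm.subst]
  | box G k => simp [Frm.subst]
  | max Y φ => by_cases h : Y = X <;> simp [Frm.subst, h]

lemma tsubst_synth_zero {φ : Frm Act} (h : φ.IsNF) (s : Trn Act) :
    Trn.tsubst (synth φ) 0 s = synth φ := by
  induction h with
  | tt => rfl
  | ff => rfl
  | var X => simp [synth, Trn.tsubst]
  | conj n G k hdisj hk ih => simp [synth, Trn.tsubst]
  | max X φ hfree hφ ih => simp [synth, Trn.tsubst, ih]

lemma synth_box_def (G : Set Act) (k : Act → Frm Act) :
    synth (.box G k) = Trn.prf {γ | ∃ a ∈ G, γ = some a}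
      (fun γ => match γ with
        | some a => if k a = Frm.ff then none else some a
        | none => none)
      (fun γ => match γ with
        | some a => if k a = Frm.ff then Trn.var 0 else synth (k a)
        | none => .id) := by simp [synth]

lemma tsubst_prf (A : Set (Option Act)) (B : Option Act → Option Act)
    (C : Option Act → Trn Act) (x : ℕ) (s : Trn Act) :
    Trn.tsubst (.prf A B C) x s = .prf A B (fun γ => Trn.tsubst (C γ) x s) := rfl

lemma tsubst_synth {ψ : Frm Act} (hψ : ψ ≠ Frm.ff) (X : ℕ) :
    ∀ φ : Frm Act, Trn.tsubst (synth φ) (X + 1) (synth ψ) = synth (Frm.subst φ X ψ) := by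
  intro φ
  induction φ with
  | tt => rfl
  | ff => rfl
  | var Y =>
    by_cases h : Y = X
    · simp [synth, Frm.subst, Trn.tsubst, h]
    · have hne : Y + 1 ≠ X + 1 := by omega
      simp [synth, Frm.subst, Trn.tsubst, h, hne]
  | conj n f ih =>
    have hz : (0 : ℕ) ≠ X + 1 := by omega
    simp [synth, Frm.subst, Trn.tsubst, hz, ih]
  | box G k ih =>
    show Trn.tsubst (synth (.box G k)) (X + 1) (synth ψ)
        = synth (.box G (fun a => Frm.subst (k a) X ψ))
    rw [synth_box_def, synth_box_def, tsubst_prf]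
    congr 1
    · funext γ
      cases γ with
      | none => rfl
      | some a =>
        show (if k a = Frm.ff then none else some a)
            = (if Frm.subst (k a) X ψ = Frm.ff then none else some a)
        by_cases hka : k a = Frm.ff
        · rw [if_pos hka, if_pos ((subst_eq_ff_iff hψ X (k a)).mpr hka)]
        · rw [if_neg hka, if_neg (fun h => hka ((subst_eq_ff_iff hψ X (k a)).mp h))]
    · funext γ
      cases γ with
      | none => rfl
      | some a =>
        show Trn.tsubst (if k a = Frm.ff then Trn.var 0 else synth (k a)) (X + 1) (synth ψ)
            = (if Frm.subst (k a) X ψ = Frm.ff then Trn.var 0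
                else synth (Frm.subst (k a) X ψ))
        by_cases hka : k a = Frm.ff
        · rw [if_pos hka, if_pos ((subst_eq_ff_iff hψ X (k a)).mpr hka)]
          show (if (0 : ℕ) = X + 1 then synth ψ else .var 0) = .var 0
          rw [if_neg (by omega : (0 : ℕ) ≠ X + 1)]
        · rw [if_neg hka, if_neg (fun h => hka ((subst_eq_ff_iff hψ X (k a)).mp h)), ih]
  | max Y φ ih =>
    by_cases h : Y = X
    · subst h; simp [synth, Frm.subst, Trn.tsubst]
    · have hne : Y + 1 ≠ X + 1 := by omega
      simp [synth, Frm.subst, Trn.tsubst, h, hne, ih]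

lemma topMax_subst (σ : Frm Act) {X : ℕ} :
    ∀ {φ : Frm Act}, Frm.gvar X φ → Frm.topMax (Frm.subst φ X σ) ≤ Frm.topMax φ := by
  intro φ
  induction φ with
  | tt => intro _; exact le_refl _
  | ff => intro _; exact le_refl _
  | var Y =>
    intro h
    show Frm.topMax (if Y = X then σ else .var Y) ≤ _
    rw [if_neg h]
  | conj n f ih => intro _; exact le_refl _
  | box G k ih => intro _; exact le_refl _
  | max Y φ ih =>
    intro h
    show Frm.topMax (if Y = X then Frm.max Y φ else .max Y (Frm.subst φ X σ)) ≤ _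
    by_cases hYX : Y = X
    · rw [if_pos hYX]
    · rw [if_neg hYX]
      rcases h with h | h
      · exact absurd h hYX
      · show Frm.topMax (Frm.subst φ X σ) + 1 ≤ Frm.topMax φ + 1
        exact Nat.succ_le_succ (ih h)

lemma not_viol_tt {p : L.S} {t : List Act} : ¬ Viol L p t Frm.tt := by
  intro h; cases h

lemma step_of_prf {G : Set (Option Act)} {out : Option Act → Option Act}
    {k : Option Act → Trn Act} {γ μ : Option Act} {e' : Trn Act}
    (h : γ ∈ G) (hout : out γ = μ) (hk : k γ = e') :
    TStep (Trn.prf G out k) (γ, μ) e' := by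
  subst hout; subst hk; exact TStep.prf h

lemma tstep_fix_inv {x : ℕ} {e : Trn Act} {l : Option Act × Option Act} {e' : Trn Act}
    (h : TStep (.fix x e) l e') : TStep (Trn.tsubst e x (.fix x e)) l e' := by
  cases h with
  | fix h => exact h

lemma tstep_sel_inv {n : ℕ} {f : Fin n → Trn Act} {l : Option Act × Option Act} {e' : Trn Act}
    (h : TStep (.sel n f) l e') : ∃ i, TStep (f i) l e' := by
  cases h with
  | sel i h => exact ⟨i, h⟩

lemma tstep_prf_inv {G : Set (Option Act)} {out : Option Act → Option Act}
    {k : Option Act → Trn Act} {l : Option Act × Option Act} {e' : Trn Act}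
    (h : TStep (.prf G out k) l e') : l.1 ∈ G := by
  cases h with
  | prf h => exact h

lemma key (L : LTS Act) :
    ∀ N : ℕ, ∀ φ : Frm Act, Frm.topMax φ < N →
      Frm.fv φ = ∅ → φ.IsNF → φ.Guarded →
      ∀ (p r : L.S) (a : Act), WStep L p a r →
        ¬ Viol L p [] φ → ¬ Viol L p [a] φ →
        (∃ φa : Frm Act,
            TStep (synth φ) (some a, some a) (synth φa) ∧
            Frm.fv φa = ∅ ∧ φa.IsNF ∧ φa.Guarded ∧
            ∀ (q : L.S) (t : List Act), WStep L p a q → Viol L q t φa →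
              Viol L p (a :: t) φ) ∨
        ((∀ (μ : Option Act) (e' : Trn Act), ¬ TStep (synth φ) (some a, μ) e') ∧
         (∀ (μ : Option Act) (e' : Trn Act), ¬ TStep (synth φ) (none, μ) e')) := by
  intro N
  induction N with
  | zero => intro φ h; exact absurd h (Nat.not_lt_zero _)
  | succ N ih =>
    intro φ hN hc hnf hg p r a hW hnot0 hnot1
    cases hnf with
    | tt =>
      left
      exact ⟨Frm.tt, TStep.id a, hc, Frm.IsNF.tt, trivial,
        fun q t _ hv => absurd hv not_viol_tt⟩
    | ff => exact absurd (Viol.ff p) hnot0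
    | var X => exact absurd hc (by simp [Frm.fv])
    | conj n G k hdisj hk =>
      by_cases hex : ∃ i : Fin n, a ∈ G i
      · obtain ⟨i, hi⟩ := hex
        have hkff : k i a ≠ Frm.ff := by
          intro hff
          exact hnot1 (Viol.conj i (Viol.box hi hW (by rw [hff]; exact Viol.ff r)))
        have hknf : (k i a).IsNF := hk i a hi
        left
        refine ⟨k i a, ?_, ?_, hknf, ?_, ?_⟩
        · have hb : TStep (Trn.tsubst (synth (.box (G i) (k i))) 0
              (synth (.conj n fun j => .box (G j) (k j)))) (some a, some a)
              (synth (k i a)) := by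
            rw [synth_box_def, tsubst_prf]
            refine step_of_prf (γ := some a) ⟨a, hi, rfl⟩ ?_ ?_
            · simp [hkff]
            · simp [hkff, tsubst_synth_zero hknf]
          exact TStep.fix (TStep.sel i hb)
        · have h0 : Frm.fv (Frm.conj n fun j => Frm.box (G j) (k j)) = ∅ := hc
          simp only [Frm.fv, Set.iUnion_eq_empty] at h0
          exact h0 i a hi
        · exact hg i a hi
        · exact fun q t hWq hv => Viol.conj i (Viol.box hi hWq hv)
      · right
        constructor
        · intro μ e' hstep
          obtain ⟨j, hj⟩ := tstep_sel_inv (tstep_fix_inv hstep)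
          simp only [synth_box_def, tsubst_prf] at hj
          obtain ⟨b, hb, heq⟩ := tstep_prf_inv hj
          injection heq with h
          subst h
          exact hex ⟨j, hb⟩
        · intro μ e' hstep
          obtain ⟨j, hj⟩ := tstep_sel_inv (tstep_fix_inv hstep)
          simp only [synth_box_def, tsubst_prf] at hj
          obtain ⟨b, hb, heq⟩ := tstep_prf_inv hj
          exact absurd heq (by simp)
    | max X ψ hfree hψn =>
      have hgv : Frm.gvar X ψ := hg.1
      have hgψ : Frm.Guarded ψ := hg.2
      have hmaxne : (Frm.max X ψ) ≠ Frm.ff := fun h => by cases h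
      have hcφ' : Frm.fv (Frm.subst ψ X (.max X ψ)) = ∅ := by
        rw [fv_subst hc]
        exact hc
      have hnφ' : (Frm.subst ψ X (.max X ψ)).IsNF :=
        isNF_subst hc (Frm.IsNF.max X ψ hfree hψn) hψn
      have hgφ' : (Frm.subst ψ X (.max X ψ)).Guarded := guarded_subst hc hg hgψ
      have hlt : Frm.topMax (Frm.subst ψ X (.max X ψ)) < N := by
        have h1 := topMax_subst (Frm.max X ψ) (X := X) (φ := ψ) hgv
        have h2 : Frm.topMax (Frm.max X ψ) = Frm.topMax ψ + 1 := rfl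
        omega
      have heq : Trn.tsubst (synth ψ) (X + 1) (synth (.max X ψ))
          = synth (Frm.subst ψ X (.max X ψ)) := tsubst_synth hmaxne X ψ
      rcases ih (Frm.subst ψ X (.max X ψ)) hlt hcφ' hnφ' hgφ' p r a hW
          (fun h => hnot0 (Viol.max h)) (fun h => hnot1 (Viol.max h)) with
        ⟨φa, hstep, hca, hna, hga, htrans⟩ | ⟨h1, h2⟩
      · left
        refine ⟨φa, ?_, hca, hna, hga, fun q t hWq hv => Viol.max (htrans q t hWq hv)⟩
        apply TStep.fix
        show TStep (Trn.tsubst (synth ψ) (X + 1) (synth (.max X ψ))) (some a, some a) (synth φa)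
        rw [heq]; exact hstep
      · right
        refine ⟨fun μ e' hstep => ?_, fun μ e' hstep => ?_⟩
        · apply h1 μ e'
          rw [← heq]
          exact tstep_fix_inv hstep
        · apply h2 μ e'
          rw [← heq]
          exact tstep_fix_inv hstep

lemma main_aux (L : LTS Act) :
    ∀ (t : List Act) (φ : Frm Act), Frm.fv φ = ∅ → φ.IsNF → φ.Guarded →
      ∀ (p p' : L.S), (∀ t' : List Act, t' <+: t → ¬ Viol L p t' φ) →
      WTrace L p t p' →
      ∃ e' : Trn Act, WTrace (instLTS L) (synth φ, p) t (e', p') := by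
  intro t
  induction t with
  | nil =>
    intro φ _ _ _ p p' _ htr
    cases htr with
    | nil h => exact ⟨synth φ, WTrace.nil (tauStar_lift _ h)⟩
  | cons a t ihh =>
    intro φ hc hnf hg p p' hnv htr
    cases htr
    rename_i r hW htr'
    have hnot0 : ¬ Viol L p [] φ := hnv [] ⟨a :: t, rfl⟩
    have hnot1 : ¬ Viol L p [a] φ := hnv [a] ⟨t, rfl⟩
    rcases key L (Frm.topMax φ + 1) φ (Nat.lt_succ_self _) hc hnf hg p r a hW hnot0 hnot1 with
      ⟨φa, hstep, hca, hna, hga, htrans⟩ | ⟨h1, h2⟩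
    · have hnv' : ∀ t'' : List Act, t'' <+: t → ¬ Viol L r t'' φa := by
        intro t'' hpre hv
        obtain ⟨s, rfl⟩ := hpre
        exact hnv (a :: t'') ⟨s, rfl⟩ (htrans r t'' hW hv)
      obtain ⟨e', hrest⟩ := ihh φa hca hna hga r p' hnv' htr'
      obtain ⟨p₁, p₂, ht1, ht2, ht3⟩ := hW
      exact ⟨e', WTrace.cons ⟨(synth φ, p₁), (synth φa, p₂), tauStar_lift _ ht1,
        IStep.trn ht2 hstep, tauStar_lift _ ht3⟩ hrest⟩
    · obtain ⟨p₁, p₂, ht1, ht2, ht3⟩ := hW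
      exact ⟨Trn.id, WTrace.cons ⟨(synth φ, p₁), (Trn.id, p₂), tauStar_lift _ ht1,
        IStep.ter ht2 h1 h2, tauStar_lift _ ht3⟩ (id_wtrace htr')⟩

end AuxProofs


/-- non-violating trace transparency, forward direction: if no
prefix of t (including t itself) is a violating trace of p w.r.t. the closed
guarded SHMLnf formula φ, and p =t=> p', then ⟦φ⟧e[p] =t=> e'[p'] for some
transducer e'. -/
theorem nonviolating_transparency_fwd (Act : Type) (L : LTS Act) (φ : Frm Act)
    (hclosed : φ.Closed) (hnf : φ.IsNF) (hguard : φ.Guarded)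
    (p p' : L.S) (t : List Act)
    (hnv : ∀ t' : List Act, t' <+: t → ¬ Viol L p t' φ)
    (htr : WTrace L p t p') :
    ∃ e' : Trn Act, WTrace (instLTS L) (synth φ, p) t (e', p') :=
  main_aux L t φ hclosed hnf hguard p p' hnv htr

end Enf
end

section
/- Silent steps of the monitored system are silent steps of the system on non-violating systems: let φ ∈ SHMLnf be closed and guarded and let p be a system such that every trace is non-violating for p with respect to φ (for all t ∈ Act*, ¬(p ⊨v^t φ)). If ⟦φ⟧e[p] -τ-> e'[p'] then p -τ-> p', e' = ⟦φ⟧e, and every trace is non-violating for p' with respect to φ (for all t ∈ Act*, ¬(p' ⊨v^t φ)). -/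
set_option autoImplicit false

namespace Enf

open scoped Classical

variable {Act : Type}

lemma fv_subst_mem {φ : Frm Act} {X Y : ℕ} {χ : Frm Act}
    (hY : Y ∈ Frm.fv φ) (hne : Y ≠ X) : Y ∈ Frm.fv (Frm.subst φ X χ) := by
  induction φ with
  | tt => simp [Frm.fv] at hY
  | ff => simp [Frm.fv] at hY
  | var Z =>
    simp [Frm.fv] at hY
    subst hY
    simp [Frm.subst, hne, Frm.fv]
  | conj n f ih =>
    simp only [Frm.fv, Set.mem_iUnion] at hY ⊢
    obtain ⟨i, hi⟩ := hY
    exact Set.mem_iUnion.mpr ⟨i, ih i hi⟩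
  | box G k ih =>
    simp only [Frm.fv, Set.mem_iUnion] at hY ⊢
    obtain ⟨a, ha, h⟩ := hY
    exact Set.mem_iUnion₂.mpr ⟨a, ha, ih a h⟩
  | max Z ψ ih =>
    simp only [Frm.fv, Set.mem_diff, Set.mem_singleton_iff] at hY
    by_cases hZ : Z = X
    · subst hZ
      simp [Frm.subst, Frm.fv]
      exact ⟨hY.1, hY.2⟩
    · simp [Frm.subst, hZ, Frm.fv]
      exact ⟨ih hY.1, hY.2⟩

lemma subst_isNF {φ χ : Frm Act} {X : ℕ} (hχ : χ.IsNF) (h : φ.IsNF) :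
    (Frm.subst φ X χ).IsNF := by
  induction h with
  | tt => exact Frm.IsNF.tt
  | ff => exact Frm.IsNF.ff
  | var Y =>
    simp only [Frm.subst]
    split
    · exact hχ
    · exact Frm.IsNF.var Y
  | conj n G k hdisj hk ih =>
    exact Frm.IsNF.conj n G (fun i a => Frm.subst (k i a) X χ) hdisj
      (fun i a ha => ih i a ha)
  | max Y ψ hfree hψ ih =>
    simp only [Frm.subst]
    split
    · exact Frm.IsNF.max Y ψ hfree hψ
    · next hne => exact Frm.IsNF.max Y _ (fv_subst_mem hfree hne) ih

lemma subst_max_ne_ff {φ : Frm Act} {X Y : ℕ} {ψ : Frm Act}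
    (h : Frm.subst φ X (.max Y ψ) = Frm.ff) : φ = Frm.ff := by
  cases φ <;> simp only [Frm.subst] at h <;> first
    | rfl
    | (exact absurd h (by split <;> simp))
    | exact absurd h (by simp)

lemma synth_tsubst (φ : Frm Act) (X : ℕ) (ψ : Frm Act) :
    Trn.tsubst (synth φ) (X + 1) (synth (.max X ψ))
      = synth (Frm.subst φ X (.max X ψ)) := by
  induction φ with
  | tt => rfl
  | ff => rfl
  | var Y =>
    by_cases h : Y = X
    · subst h; simp [synth, Trn.tsubst, Frm.subst]
    · simp [synth, Trn.tsubst, Frm.subst, h,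
        fun hh : Y + 1 = X + 1 => h (Nat.succ_injective hh)]
  | conj n f ih =>
    simp only [synth] at ih
    simp only [synth, Frm.subst, Trn.tsubst]
    rw [if_neg (by omega : ¬ 0 = X + 1)]
    congr 1
    congr 1
    funext i
    exact ih i
  | box G k ih =>
    simp only [synth] at ih
    simp only [synth, Frm.subst, Trn.tsubst]
    congr 1
    · funext γ
      cases γ with
      | none => rfl
      | some a =>
        by_cases hff : k a = Frm.ff
        · simp [hff, Frm.subst]
        · have : Frm.subst (k a) X (.max X ψ) ≠ Frm.ff :=
            fun h => hff (subst_max_ne_ff h)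
          simp [hff, this]
    · funext γ
      cases γ with
      | none => rfl
      | some a =>
        by_cases hff : k a = Frm.ff
        · simp [hff, Trn.tsubst, Frm.subst, synth]
        · have : Frm.subst (k a) X (.max X ψ) ≠ Frm.ff :=
            fun h => hff (subst_max_ne_ff h)
          simp [hff, this, ih a]
  | max Y ψ' ih =>
    simp only [synth] at ih
    by_cases h : Y = X
    · subst h; simp [synth, Trn.tsubst, Frm.subst]
    · simp [synth, Trn.tsubst, Frm.subst, h,
        fun hh : Y + 1 = X + 1 => h (Nat.succ_injective hh), ih]

lemma tsubst_synth_box (G : Set Act) (k : Act → Frm Act) (s : Trn Act) :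
    Trn.tsubst (synth (.box G k)) 0 s = .prf {γ | ∃ a ∈ G, γ = some a}
      (fun γ => match γ with
        | some a => if k a = Frm.ff then none else some a
        | none => none)
      (fun γ => match γ with
        | some a => if k a = Frm.ff then s else Trn.tsubst (synth (k a)) 0 s
        | none => Trn.id) := by
  simp only [synth, Trn.tsubst]
  congr 1
  funext γ
  cases γ with
  | none => rfl
  | some a =>
    by_cases hff : k a = Frm.ff <;> simp [hff, Trn.tsubst]

/-- Key lemma: any transition of `⟦φ⟧e` has a proper action as input, and if
its output is τ (a suppression), then the input action witnesses a violation
of `φ` wherever the system affords it. -/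
lemma synth_step_key (L : LTS Act) :
    ∀ {e : Trn Act} {l : Option Act × Option Act} {e'' : Trn Act},
    TStep e l e'' → ∀ φ : Frm Act, φ.IsNF → e = synth φ →
    ∃ a : Act, l.1 = some a ∧
      (l.2 = none → ∀ p p' : L.S, L.Tr p (some a) p' → Viol L p [a] φ) := by
  intro e l e'' h
  induction h with
  | id a =>
    intro φ hnf he
    exact ⟨a, rfl, fun h2 => absurd h2 (by simp)⟩
  | prf hγ =>
    intro φ hnf he
    exfalso; cases hnf <;> rw [synth] at he <;> exact nomatch he
  | sel i h ih =>
    intro φ hnf he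
    exfalso; cases hnf <;> rw [synth] at he <;> exact nomatch he
  | fix h' ih =>
    intro φ hnf he
    cases hnf with
    | tt => simp [synth] at he
    | ff => simp [synth] at he
    | var X => simp [synth] at he
    | max X ψ hfree hψ =>
      simp only [synth, Trn.fix.injEq] at he
      obtain ⟨hx, he0⟩ := he
      subst hx; subst he0
      have hunf : Trn.tsubst (synth ψ) (X + 1) (.fix (X + 1) (synth ψ))
          = synth (Frm.subst ψ X (.max X ψ)) := by
        have := synth_tsubst (Act := Act) ψ X ψ
        simpa [synth] using this
      obtain ⟨a, h1, h2⟩ := ih _ (subst_isNF (Frm.IsNF.max X ψ hfree hψ) hψ) hunf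
      exact ⟨a, h1, fun hτ p p' tr => Viol.max (h2 hτ p p' tr)⟩
    | conj n G k hdisj hk =>
      rw [show synth (Frm.conj n fun i => Frm.box (G i) (k i))
          = Trn.fix 0 (Trn.sel n fun i => synth (Frm.box (G i) (k i))) from rfl] at he
      injection he with hx he0
      subst hx; subst he0
      simp only [Trn.tsubst] at h'
      cases h' with
      | sel i h'' =>
        simp only [tsubst_synth_box] at h''
        cases h'' with
        | prf hγ =>
          next γ =>
          obtain ⟨a, ha, hγa⟩ := hγ
          subst hγa
          refine ⟨a, rfl, fun hτ p p' tr => ?_⟩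
          have hτ' : (if k i a = Frm.ff then (none : Option Act) else some a)
              = none := hτ
          by_cases hff : k i a = Frm.ff
          · have hws : WStep L p a p' :=
              ⟨p, p', Relation.ReflTransGen.refl, tr, Relation.ReflTransGen.refl⟩
            have hv : Viol L p' [] (k i a) := by
              rw [hff]; exact Viol.ff p'
            exact Viol.conj i (Viol.box ha hws hv)
          · rw [if_neg hff] at hτ'
            exact nomatch hτ'

lemma viol_tau {L : LTS Act} {p p' : L.S} {t : List Act} {φ : Frm Act}
    (htr : L.Tr p none p') (h : Viol L p' t φ) : Viol L p t φ := by
  induction h generalizing p with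
  | ff q => exact Viol.ff p
  | conj j h ih => exact Viol.conj j (ih htr)
  | box hmem hw hv _ =>
    obtain ⟨q₁, q₂, hts, tr, hts'⟩ := hw
    exact Viol.box hmem ⟨q₁, q₂, Relation.ReflTransGen.head htr hts, tr, hts'⟩ hv
  | max h ih => exact Viol.max (ih htr)

/-- silent steps of the monitored system are silent steps of the
system on non-violating systems: for closed guarded SHMLnf φ, if every trace is
non-violating for p and ⟦φ⟧e[p] -τ-> e'[p'], then p -τ-> p', e' = ⟦φ⟧e, and
every trace is non-violating for p'. -/
theorem silent_step_reflects (Act : Type) (L : LTS Act) (φ : Frm Act)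
    (hclosed : φ.Closed) (hnf : φ.IsNF) (hguard : φ.Guarded)
    (p p' : L.S) (e' : Trn Act)
    (hnv : ∀ t : List Act, ¬ Viol L p t φ)
    (hstep : IStep L (synth φ, p) none (e', p')) :
    L.Tr p none p' ∧ e' = synth φ ∧ ∀ t : List Act, ¬ Viol L p' t φ := by
  cases hstep with
  | trn htr ht =>
    exfalso
    obtain ⟨b, h1, h2⟩ := synth_step_key L ht φ hnf rfl
    injection h1 with h1
    subst h1
    exact hnv _ (h2 rfl p p' htr)
  | asy htr =>
    exact ⟨htr, rfl, fun t hv => hnv t (viol_tau htr hv)⟩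
  | ins ht =>
    exfalso
    obtain ⟨a, h1, _⟩ := synth_step_key L ht φ hnf rfl
    exact nomatch h1

end Enf
end
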